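/- Let n, ℓ, L ≥ 1 be integers, ε > 0, and let C_2 : {0,1}^{ℓn} × {0,1}^{ℓn} × ({0,1}^{ℓn})^{L−1} → ZMod 2. Then there exists a function C_1 : ({0,1}^{ℓn})^L → Finset({0,1}^{ℓn}) all of whose output sets have size at most 1/ε², such that for every permutation R of {0,1}^{ℓn} that is the ℓ-direct product of a permutation of {0,1}^n: if Pr_{x̄,r}(C_2(R(x̄), r, (R²(x̄), …, R^L(x̄))) = b(x̄,r)) > 1/2 + ε, where x̄ and r are uniform on {0,1}^{ℓn}, then for at least ε·2^{ℓn} strings x̄ ∈ {0,1}^{ℓn} it holds that x̄ ∈ C_1(R(x̄), R²(x̄), …, R^L(x̄)). -/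

import Mathlib

open scoped Classical

abbrev Str (k : ℕ) : Type := Fin k → ZMod 2
def ipb {ℓ n : ℕ} (x r : Fin ℓ → Str n) : ZMod 2 := ∑ i, ∑ j, x i j * r i j

/-- fraction of elements of a finite type satisfying `p` (probability under uniform distribution) -/
noncomputable def fr {α : Type} [Fintype α] (p : α → Prop) : ℝ :=
  ((Finset.univ.filter p).card : ℝ) / (Fintype.card α : ℝ)

noncomputable def sgn (a : ZMod 2) : ℝ := if a = 0 then 1 else -1

lemma sgn_add (a b : ZMod 2) : sgn (a + b) = sgn a * sgn b := by
  fin_cases a <;> fin_cases b <;> simp [sgn] <;> norm_num <;> split_ifs <;> norm_num <;> contradiction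

lemma ipb_add_left {ℓ n : ℕ} (x y r : Fin ℓ → Str n) :
    ipb (x + y) r = ipb x r + ipb y r := by
  simp [ipb, add_mul, Finset.sum_add_distrib]

lemma ipb_add_right {ℓ n : ℕ} (x r s : Fin ℓ → Str n) :
    ipb x (r + s) = ipb x r + ipb x s := by
  simp [ipb, mul_add, Finset.sum_add_distrib]

lemma zmod2_add_eq_zero : ∀ a b : ZMod 2, a + b = 0 ↔ a = b := by decide

lemma pi_add_eq_zero {ℓ n : ℕ} (r s : Fin ℓ → Str n) : r + s = 0 ↔ s = r := by
  constructor
  · intro h; funext i j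
    have h2 : r i j + s i j = 0 := congrFun (congrFun h i) j
    exact ((zmod2_add_eq_zero _ _).mp h2).symm
  · intro h; funext i j
    show r i j + s i j = 0
    rw [h]
    exact (zmod2_add_eq_zero (r i j) (r i j)).mpr rfl

lemma sum_sgn_ipb {ℓ n : ℕ} (t : Fin ℓ → Str n) :
    ∑ x : Fin ℓ → Str n, sgn (ipb x t) =
      if t = 0 then (Fintype.card (Fin ℓ → Str n) : ℝ) else 0 := by
  by_cases ht : t = 0
  · subst ht
    simp [ipb, sgn, Finset.card_univ]
  · rw [if_neg ht]
    obtain ⟨i₀, hi⟩ : ∃ i, t i ≠ 0 := by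
      by_contra hx; push_neg at hx; exact ht (funext hx)
    obtain ⟨j₀, hj⟩ : ∃ j, t i₀ j ≠ 0 := by
      by_contra hx; push_neg at hx; exact hi (funext hx)
    have hj1 : t i₀ j₀ = 1 := by
      have : ∀ a : ZMod 2, a ≠ 0 → a = 1 := by decide
      exact this _ hj
    set e : Fin ℓ → Str n := fun i j => if i = i₀ ∧ j = j₀ then 1 else 0 with he
    have hipbe : ipb e t = 1 := by
      have : ∀ i, ∑ j, e i j * t i j = if i = i₀ then t i₀ j₀ else 0 := by
        intro i
        by_cases hii : i = i₀
        · subst hii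
          rw [if_pos rfl]
          rw [Finset.sum_eq_single j₀]
          · simp [he, hj1]
          · intro b _ hb; simp [he, hb]
          · intro hb; exact absurd (Finset.mem_univ _) hb
        · rw [if_neg hii]
          apply Finset.sum_eq_zero; intro j _; simp [he, hii]
      rw [ipb] ; rw [Finset.sum_congr rfl (fun i _ => this i)]
      simp [hj1]
    have key : ∑ x : Fin ℓ → Str n, sgn (ipb x t)
        = ∑ x : Fin ℓ → Str n, sgn (ipb (x + e) t) := by
      exact (Fintype.sum_equiv (Equiv.addRight e) _ _ (fun x => rfl)).symm
    have flip : ∀ x : Fin ℓ → Str n, sgn (ipb (x + e) t) = - sgn (ipb x t) := by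
      intro x
      rw [ipb_add_left, hipbe, sgn_add]
      simp [sgn]
    rw [Finset.sum_congr rfl (fun x _ => flip x), Finset.sum_neg_distrib] at key
    linarith [key]

lemma parseval {ℓ n : ℕ} (f : (Fin ℓ → Str n) → ZMod 2) :
    ∑ x : Fin ℓ → Str n, (∑ r : Fin ℓ → Str n, sgn (f r + ipb x r)) ^ 2 =
      (Fintype.card (Fin ℓ → Str n) : ℝ) ^ 2 := by
  set N : ℝ := (Fintype.card (Fin ℓ → Str n) : ℝ) with hN
  have step1 : ∀ x : Fin ℓ → Str n,
      (∑ r : Fin ℓ → Str n, sgn (f r + ipb x r)) ^ 2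
        = ∑ r : Fin ℓ → Str n, ∑ s : Fin ℓ → Str n,
            sgn (f r + f s) * sgn (ipb x (r + s)) := by
    intro x
    rw [sq, Finset.sum_mul_sum]
    refine Finset.sum_congr rfl fun r _ => Finset.sum_congr rfl fun s _ => ?_
    rw [← sgn_add, ← sgn_add, ipb_add_right]
    congr 1
    abel
  calc ∑ x : Fin ℓ → Str n, (∑ r : Fin ℓ → Str n, sgn (f r + ipb x r)) ^ 2
      = ∑ x : Fin ℓ → Str n, ∑ r : Fin ℓ → Str n, ∑ s : Fin ℓ → Str n,
          sgn (f r + f s) * sgn (ipb x (r + s)) := by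
        exact Finset.sum_congr rfl fun x _ => step1 x
    _ = ∑ r : Fin ℓ → Str n, ∑ s : Fin ℓ → Str n,
          sgn (f r + f s) * ∑ x : Fin ℓ → Str n, sgn (ipb x (r + s)) := by
        rw [Finset.sum_comm]
        refine Finset.sum_congr rfl fun r _ => ?_
        rw [Finset.sum_comm]
        refine Finset.sum_congr rfl fun s _ => ?_
        rw [Finset.mul_sum]
    _ = ∑ r : Fin ℓ → Str n, ∑ s : Fin ℓ → Str n,
          (if s = r then sgn (f r + f s) * N else 0) := by
        refine Finset.sum_congr rfl fun r _ => Finset.sum_congr rfl fun s _ => ?_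
        rw [sum_sgn_ipb]
        by_cases h : s = r
        · rw [if_pos ((pi_add_eq_zero r s).mpr h), if_pos h]
        · rw [if_neg (fun hc => h ((pi_add_eq_zero r s).mp hc)), if_neg h, mul_zero]
    _ = ∑ r : Fin ℓ → Str n, sgn (f r + f r) * N := by
        refine Finset.sum_congr rfl fun r _ => ?_
        rw [Finset.sum_ite_eq' Finset.univ r (fun s => sgn (f r + f s) * N)]
        simp
    _ = N ^ 2 := by
        have : ∀ r : Fin ℓ → Str n, sgn (f r + f r) = 1 := by
          intro r; rw [(zmod2_add_eq_zero _ _).mpr rfl]; simp [sgn]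
        rw [Finset.sum_congr rfl fun r _ => by rw [this r, one_mul]]
        rw [Finset.sum_const, Finset.card_univ]
        simp [sq, hN]


lemma fr_eq {α : Type} [Fintype α] (p : α → Prop) [h : DecidablePred p] :
    fr p = ((Finset.univ.filter p).card : ℝ) / (Fintype.card α : ℝ) := by
  have h2 : @Finset.filter α p h Finset.univ
      = @Finset.filter α p (fun a => Classical.propDecidable (p a)) Finset.univ := by
    congr 1
  unfold fr
  rw [h2]

lemma fr_le_one {α : Type} [Fintype α] (p : α → Prop) : fr p ≤ 1 := by
  unfold fr
  rcases Nat.eq_zero_or_pos (Fintype.card α) with h | h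
  · simp [h]
  · rw [div_le_one (by exact_mod_cast h)]
    exact_mod_cast (Finset.card_filter_le _ _).trans_eq (Finset.card_univ)

lemma listsize {ℓ n : ℕ} (ε : ℝ) (hε : 0 < ε) (f : (Fin ℓ → Str n) → ZMod 2) :
    ((Finset.univ.filter (fun x : Fin ℓ → Str n =>
       1/2 + ε/2 ≤ fr (fun r => f r = ipb x r))).card : ℝ) ≤ 1 / ε ^ 2 := by
  set N : ℝ := (Fintype.card (Fin ℓ → Str n) : ℝ) with hNdef
  have hNpos : 0 < N := by
    rw [hNdef]; exact_mod_cast Fintype.card_pos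
  set c : (Fin ℓ → Str n) → ℝ := fun x => ∑ r : Fin ℓ → Str n, sgn (f r + ipb x r)
    with hcdef
  have hc : ∀ x, c x =
      2 * ((Finset.univ.filter (fun r => f r = ipb x r)).card : ℝ) - N := by
    intro x
    have hterm : ∀ r : Fin ℓ → Str n,
        sgn (f r + ipb x r) = 2 * (if f r = ipb x r then (1:ℝ) else 0) - 1 := by
      intro r
      by_cases h : f r = ipb x r
      · rw [if_pos h, (zmod2_add_eq_zero _ _).mpr h]; simp [sgn]; norm_num
      · have hne : f r + ipb x r ≠ 0 := fun hc0 => h ((zmod2_add_eq_zero _ _).mp hc0)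
        rw [if_neg h]; simp [sgn, hne]
    rw [hcdef]
    simp only
    rw [Finset.sum_congr rfl fun r _ => hterm r, Finset.sum_sub_distrib,
      ← Finset.mul_sum, Finset.sum_boole, Finset.sum_const, Finset.card_univ]
    simp [hNdef]
  set S := Finset.univ.filter (fun x : Fin ℓ → Str n =>
       1/2 + ε/2 ≤ fr (fun r => f r = ipb x r)) with hSdef
  have hcS : ∀ x ∈ S, ε * N ≤ c x := by
    intro x hx
    rw [hSdef, Finset.mem_filter] at hx
    have hfr := hx.2
    rw [fr_eq, ← hNdef, le_div_iff₀ hNpos] at hfr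
    rw [hc x]
    linarith
  have hsq : ∀ x ∈ S, (ε * N) ^ 2 ≤ (c x) ^ 2 := by
    intro x hx
    exact pow_le_pow_left₀ (le_of_lt (mul_pos hε hNpos)) (hcS x hx) 2
  have hsumS : (S.card : ℝ) * (ε * N) ^ 2 ≤ ∑ x ∈ S, (c x) ^ 2 := by
    calc (S.card : ℝ) * (ε * N) ^ 2 = ∑ _x ∈ S, (ε * N) ^ 2 := by
          rw [Finset.sum_const, nsmul_eq_mul]
      _ ≤ ∑ x ∈ S, (c x) ^ 2 := Finset.sum_le_sum hsq
  have hsub : ∑ x ∈ S, (c x) ^ 2 ≤ ∑ x : Fin ℓ → Str n, (c x) ^ 2 :=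
    Finset.sum_le_sum_of_subset_of_nonneg (Finset.subset_univ S)
      (fun x _ _ => sq_nonneg _)
  have hpar : ∑ x : Fin ℓ → Str n, (c x) ^ 2 = N ^ 2 := parseval f
  have hmain : (S.card : ℝ) * (ε * N) ^ 2 ≤ N ^ 2 := by
    calc (S.card : ℝ) * (ε * N) ^ 2 ≤ ∑ x ∈ S, (c x) ^ 2 := hsumS
      _ ≤ ∑ x : Fin ℓ → Str n, (c x) ^ 2 := hsub
      _ = N ^ 2 := hpar
  rw [mul_pow] at hmain
  have hN2 : 0 < N ^ 2 := pow_pos hNpos 2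
  have hε2 : 0 < ε ^ 2 := pow_pos hε 2
  rw [le_div_iff₀ hε2]
  nlinarith [hmain, hN2, hε2]

theorem stmt9 (n ℓ L : ℕ) (hn : 1 ≤ n) (hℓ : 1 ≤ ℓ) (hL : 1 ≤ L) (ε : ℝ) (hε : 0 < ε)
    (C2 : (Fin ℓ → Str n) → (Fin ℓ → Str n) →
      (Fin (L - 1) → (Fin ℓ → Str n)) → ZMod 2) :
    ∃ C1 : (Fin L → (Fin ℓ → Str n)) → Finset (Fin ℓ → Str n),
      (∀ v, ((C1 v).card : ℝ) ≤ 1 / ε ^ 2) ∧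
      ∀ R : Equiv.Perm (Fin ℓ → Str n),
        (∃ R₀ : Equiv.Perm (Str n), ∀ x i, R x i = R₀ (x i)) →
        1 / 2 + ε < fr (fun p : (Fin ℓ → Str n) × (Fin ℓ → Str n) =>
            C2 (R p.1) p.2
              (fun j : Fin (L - 1) => (R ^ ((j : ℕ) + 2)) p.1) = ipb p.1 p.2) →
        ε * 2 ^ (ℓ * n) ≤
          ((Finset.univ.filter (fun x : Fin ℓ → Str n =>
            x ∈ C1 (fun j : Fin L => (R ^ ((j : ℕ) + 1)) x))).card : ℝ) := by
  set C1 : (Fin L → (Fin ℓ → Str n)) → Finset (Fin ℓ → Str n) := fun v =>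
    Finset.univ.filter (fun x : Fin ℓ → Str n =>
      1/2 + ε/2 ≤ fr (fun r : Fin ℓ → Str n =>
        C2 (v ⟨0, hL⟩) r (fun j : Fin (L-1) => v ⟨(j : ℕ) + 1, by omega⟩) = ipb x r))
    with hC1
  refine ⟨C1, fun v => listsize ε hε _, ?_⟩
  intro R _ h
  set N : ℝ := (Fintype.card (Fin ℓ → Str n) : ℝ) with hNdef
  have hNpos : 0 < N := by rw [hNdef]; exact_mod_cast Fintype.card_pos
  have hNval : N = 2 ^ (ℓ * n) := by
    rw [hNdef]
    have : Fintype.card (Fin ℓ → Str n) = 2 ^ (ℓ * n) := by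
      rw [Fintype.card_fun]
      have : Fintype.card (Str n) = 2 ^ n := by
        rw [Fintype.card_fun]
        simp
      rw [this, Fintype.card_fin, ← pow_mul, mul_comm]
    rw [this]
    push_cast
    ring
  -- the per-x predicate
  set Q : (Fin ℓ → Str n) → (Fin ℓ → Str n) → Prop := fun x r =>
    C2 (R x) r (fun j : Fin (L-1) => (R ^ ((j : ℕ) + 2)) x) = ipb x r with hQ
  -- membership in C1 along the orbit equals good agreement
  have hmem : ∀ x : Fin ℓ → Str n,
      (x ∈ C1 (fun j : Fin L => (R ^ ((j : ℕ) + 1)) x)) ↔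
        1/2 + ε/2 ≤ fr (fun r => Q x r) := by
    intro x
    rw [hC1]
    simp only [Finset.mem_filter, Finset.mem_univ, true_and]
    have : (fun r : Fin ℓ → Str n =>
        C2 ((R ^ ((0:ℕ) + 1)) x) r
          (fun j : Fin (L-1) => (R ^ (((j : ℕ) + 1) + 1)) x) = ipb x r)
        = fun r => Q x r := by
      funext r
      rw [hQ]
      simp only [zero_add, pow_one]
    rw [this]
  -- counting
  set a : (Fin ℓ → Str n) → ℕ := fun x => (Finset.univ.filter (fun r => Q x r)).card with ha
  have hsplit : ((Finset.univ.filter (fun p : (Fin ℓ → Str n) × (Fin ℓ → Str n) => Q p.1 p.2)).card : ℝ)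
      = ∑ x : Fin ℓ → Str n, (a x : ℝ) := by
    rw [← Finset.sum_boole, Fintype.sum_prod_type]
    exact Finset.sum_congr rfl fun x _ => by rw [Finset.sum_boole]
  have hcardprod : ((Fintype.card ((Fin ℓ → Str n) × (Fin ℓ → Str n))) : ℝ) = N * N := by
    rw [Fintype.card_prod, hNdef]; push_cast; ring
  have hfrpairs : 1/2 + ε < (∑ x : Fin ℓ → Str n, (a x : ℝ)) / (N * N) := by
    rw [← hsplit, ← hcardprod]
    rw [fr_eq] at h
    exact h
  have hsum_gt : (1/2 + ε) * (N * N) < ∑ x : Fin ℓ → Str n, (a x : ℝ) := by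
    rw [← lt_div_iff₀ (mul_pos hNpos hNpos)]
    exact hfrpairs
  have hε2 : ε < 1/2 := by
    have h1 : fr (fun p : (Fin ℓ → Str n) × (Fin ℓ → Str n) =>
        C2 (R p.1) p.2
          (fun j : Fin (L - 1) => (R ^ ((j : ℕ) + 2)) p.1) = ipb p.1 p.2) ≤ 1 :=
      fr_le_one _
    linarith
  -- split the sum
  set S := Finset.univ.filter (fun x : Fin ℓ → Str n =>
    x ∈ C1 (fun j : Fin L => (R ^ ((j : ℕ) + 1)) x)) with hS
  have hax_le : ∀ x : Fin ℓ → Str n, (a x : ℝ) ≤ N := by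
    intro x
    rw [hNdef]
    exact_mod_cast (Finset.card_filter_le _ _).trans_eq Finset.card_univ
  have hax_lt : ∀ x : Fin ℓ → Str n,
      ¬ x ∈ C1 (fun j : Fin L => (R ^ ((j : ℕ) + 1)) x) →
      (a x : ℝ) ≤ (1/2 + ε/2) * N := by
    intro x hx
    have hlt : ¬ (1/2 + ε/2 ≤ fr (fun r => Q x r)) := fun hcon => hx ((hmem x).mpr hcon)
    push_neg at hlt
    rw [fr_eq, ← hNdef, div_lt_iff₀ hNpos] at hlt
    exact le_of_lt hlt
  have hsum_split : ∑ x : Fin ℓ → Str n, (a x : ℝ)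
      ≤ (S.card : ℝ) * N + (N - (S.card : ℝ)) * ((1/2 + ε/2) * N) := by
    have hdecomp := Finset.sum_filter_add_sum_filter_not Finset.univ
      (fun x : Fin ℓ → Str n => x ∈ C1 (fun j : Fin L => (R ^ ((j : ℕ) + 1)) x))
      (fun x : Fin ℓ → Str n => (a x : ℝ))
    have h1 : ∑ x ∈ S, (a x : ℝ) ≤ (S.card : ℝ) * N := by
      calc ∑ x ∈ S, (a x : ℝ) ≤ ∑ _x ∈ S, N := Finset.sum_le_sum fun x _ => hax_le x
        _ = (S.card : ℝ) * N := by rw [Finset.sum_const, nsmul_eq_mul]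
    set T := Finset.univ.filter (fun x : Fin ℓ → Str n =>
      ¬ x ∈ C1 (fun j : Fin L => (R ^ ((j : ℕ) + 1)) x)) with hT
    have hTcard : (T.card : ℝ) = N - (S.card : ℝ) := by
      have := Finset.card_filter_add_card_filter_not
        (s := (Finset.univ : Finset (Fin ℓ → Str n)))
        (p := fun x : Fin ℓ → Str n => x ∈ C1 (fun j : Fin L => (R ^ ((j : ℕ) + 1)) x))
      rw [Finset.card_univ] at this
      rw [hNdef]
      push_cast
      rw [hT, hS]
      rw [← this]
      push_cast
      ring
    have h2 : ∑ x ∈ T, (a x : ℝ) ≤ (N - (S.card : ℝ)) * ((1/2 + ε/2) * N) := by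
      calc ∑ x ∈ T, (a x : ℝ) ≤ ∑ _x ∈ T, (1/2 + ε/2) * N := by
            refine Finset.sum_le_sum fun x hx => ?_
            refine hax_lt x ?_
            rw [hT, Finset.mem_filter] at hx
            exact hx.2
        _ = (T.card : ℝ) * ((1/2 + ε/2) * N) := by rw [Finset.sum_const, nsmul_eq_mul]
        _ = (N - (S.card : ℝ)) * ((1/2 + ε/2) * N) := by rw [hTcard]
    calc ∑ x : Fin ℓ → Str n, (a x : ℝ) = ∑ x ∈ S, (a x : ℝ) + ∑ x ∈ T, (a x : ℝ) := by
          rw [← hdecomp]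
      _ ≤ (S.card : ℝ) * N + (N - (S.card : ℝ)) * ((1/2 + ε/2) * N) := by
          exact add_le_add h1 h2
  -- finish
  rw [← hNval]
  have hScard0 : (0:ℝ) ≤ (S.card : ℝ) := Nat.cast_nonneg _
  nlinarith [hsum_gt, hsum_split, hNpos, hScard0, hε2, hε,
    mul_pos hNpos hNpos]
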